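/- (Deterministic core of the ergodicity result.) Let Φ(X) = ∑_k E_k X E_kᴴ be a map on D×D complex matrices with ∑_k E_kᴴ E_k = I, and suppose Φ has a unique invariant state, i.e., there is exactly one positive semidefinite trace-1 matrix ρ_es with Φ(ρ_es) = ρ_es. Then for every density matrix ρ₀, the Cesàro averages converge to the invariant state: (1/N) ∑_{n=1}^{N} Φ^[n](ρ₀) → ρ_es as N → ∞. -/

import Mathlib

open Matrix ComplexOrder Filter

/-- A density matrix: positive semidefinite with trace 1. -/
def IsDensity {D : ℕ} (ρ : Matrix (Fin D) (Fin D) ℂ) : Prop :=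
  ρ.PosSemidef ∧ ρ.trace = 1

section CesaroAux

attribute [local instance] Matrix.normedAddCommGroup Matrix.normedSpace

variable {D : ℕ}
variable {D : ℕ}

lemma quad_single (ρ : Matrix (Fin D) (Fin D) ℂ) (i j : Fin D) (c d : ℂ) :
    star (Pi.single i c) ⬝ᵥ (ρ *ᵥ Pi.single j d) = (starRingEnd ℂ) c * (ρ i j * d) := by
  simp [dotProduct, mulVec, Pi.single_apply, mul_ite, ite_mul, Finset.mul_sum, apply_ite,
    Finset.sum_ite_eq', mul_comm, mul_left_comm]

lemma diag_nonneg {ρ : Matrix (Fin D) (Fin D) ℂ} (h : ρ.PosSemidef) (i : Fin D) :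
    0 ≤ ρ i i := by
  have := h.dotProduct_mulVec_nonneg (Pi.single i 1)
  rw [quad_single] at this; simpa using this

lemma entry_norm_le_one {ρ : Matrix (Fin D) (Fin D) ℂ}
    (hPSD : ρ.PosSemidef) (htr : ρ.trace = 1) (i j : Fin D) : ‖ρ i j‖ ≤ 1 := by
  have hdiag : ∀ k, 0 ≤ ρ k k := diag_nonneg hPSD
  have hdre : ∀ k, 0 ≤ (ρ k k).re := fun k => (Complex.nonneg_iff.mp (hdiag k)).1
  have hsum : ∑ k, (ρ k k).re = 1 := by
    have : (ρ.trace).re = 1 := by rw [htr]; simp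
    rw [Matrix.trace] at this
    simpa [Complex.re_sum] using this
  have hle1 : ∀ k, (ρ k k).re ≤ 1 := by
    intro k
    rw [← hsum]
    exact Finset.single_le_sum (fun l _ => hdre l) (Finset.mem_univ k)
  by_cases hij : i = j
  · subst hij
    have him : (ρ i i).im = 0 := ((Complex.nonneg_iff.mp (hdiag i)).2).symm
    have heq : ρ i i = ((ρ i i).re : ℂ) := by
      apply Complex.ext <;> simp [him]
    rw [heq, Complex.norm_real, Real.norm_eq_abs, abs_of_nonneg (hdre i)]
    exact hle1 i
  · by_cases hz0 : ρ i j = 0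
    · simp [hz0]
    have hz : ρ i j ≠ 0 := hz0
    obtain ⟨z, hzdef⟩ : ∃ z, ρ i j = z := ⟨_, rfl⟩
    obtain ⟨r, hrdef⟩ : ∃ r : ℝ, ‖z‖ = r := ⟨_, rfl⟩
    have hr0 : 0 < r := hrdef ▸ norm_pos_iff.mpr (hzdef ▸ hz)
    have hnz : (r:ℂ) ≠ 0 := by exact_mod_cast hr0.ne'
    obtain ⟨c, hcdef⟩ : ∃ c : ℂ, -z / (r:ℂ) = c := ⟨_, rfl⟩
    have hzz : (starRingEnd ℂ) z * z = (r:ℂ) * r := by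
      rw [← Complex.normSq_eq_conj_mul_self, Complex.normSq_eq_norm_sq,
        hrdef]
      push_cast; ring
    have hcc : (starRingEnd ℂ) c * c = 1 := by
      rw [← hcdef, map_div₀, map_neg, Complex.conj_ofReal, div_mul_div_comm, neg_mul_neg, hzz,
        div_self (mul_ne_zero hnz hnz)]
    have hcz : (starRingEnd ℂ) c * z = -(r:ℂ) := by
      rw [← hcdef, map_div₀, map_neg, Complex.conj_ofReal, neg_div, neg_mul,
        div_mul_eq_mul_div, hzz, mul_div_assoc, div_self hnz, mul_one]
    have hzc : (starRingEnd ℂ) z * c = -(r:ℂ) := by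
      rw [← hcdef, neg_div, mul_neg, ← mul_div_assoc, hzz, mul_div_assoc, div_self hnz, mul_one]
    have hji : ρ j i = (starRingEnd ℂ) z := by
      rw [← hzdef, ← hPSD.1.apply j i]
      rfl
    have key := hPSD.dotProduct_mulVec_nonneg (Pi.single i c + Pi.single j 1)
    rw [star_add, add_dotProduct, mulVec_add, dotProduct_add, dotProduct_add,
      quad_single, quad_single, quad_single, quad_single, hji, hzdef] at key
    have key2 : (0:ℂ) ≤ ρ i i - r - r + ρ j j := by
      have e : (starRingEnd ℂ) c * (ρ i i * c) + (starRingEnd ℂ) c * (z * 1) +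
          ((starRingEnd ℂ) 1 * ((starRingEnd ℂ) z * c) + (starRingEnd ℂ) 1 * (ρ j j * 1))
          = ρ i i - r - r + ρ j j := by
        simp only [_root_.map_one, one_mul, mul_one]
        rw [show (starRingEnd ℂ) c * (ρ i i * c) = ((starRingEnd ℂ) c * c) * ρ i i from by ring,
          hcc, one_mul, hcz, hzc]
        ring
      rw [e] at key
      exact key
    have hkre := (Complex.nonneg_iff.mp key2).1
    simp only [Complex.add_re, Complex.sub_re, Complex.ofReal_re] at hkre
    have h1 := hle1 i; have h2 := hle1 j
    rw [hzdef, hrdef]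
    linarith


lemma posSemidef_finset_sum {ι : Type*} (s : Finset ι) (f : ι → Matrix (Fin D) (Fin D) ℂ)
    (h : ∀ k ∈ s, (f k).PosSemidef) : (∑ k ∈ s, f k).PosSemidef :=
  Finset.sum_induction f _ (fun _ _ ha hb => ha.add hb) Matrix.PosSemidef.zero h

lemma posSemidef_smul {c : ℂ} (hc : 0 ≤ c) {M : Matrix (Fin D) (Fin D) ℂ}
    (hM : M.PosSemidef) : (c • M).PosSemidef := by
  obtain ⟨hre, him⟩ := Complex.nonneg_iff.mp hc
  refine Matrix.PosSemidef.of_dotProduct_mulVec_nonneg ?_ ?_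
  · have hcr : star c = c := by
      rw [Complex.star_def, Complex.conj_eq_iff_im]; exact him.symm
    rw [Matrix.IsHermitian, Matrix.conjTranspose_smul, hcr, hM.1]
  · intro x
    rw [Matrix.smul_mulVec, dotProduct_smul, smul_eq_mul]
    exact mul_nonneg hc (hM.dotProduct_mulVec_nonneg x)

lemma isClosed_density : IsClosed {ρ : Matrix (Fin D) (Fin D) ℂ | IsDensity ρ} := by
  have h1 : IsClosed {ρ : Matrix (Fin D) (Fin D) ℂ | ρ.IsHermitian} :=
    isClosed_eq (continuous_id.matrix_conjTranspose) continuous_id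
  have h2 : ∀ x : Fin D → ℂ,
      IsClosed {ρ : Matrix (Fin D) (Fin D) ℂ | 0 ≤ star x ⬝ᵥ ρ *ᵥ x} := by
    intro x
    have hc : Continuous fun ρ : Matrix (Fin D) (Fin D) ℂ => star x ⬝ᵥ ρ *ᵥ x :=
      (continuous_const).dotProduct (continuous_id.matrix_mulVec continuous_const)
    have hS : IsClosed {z : ℂ | 0 ≤ z.re ∧ 0 = z.im} :=
      (isClosed_le continuous_const Complex.continuous_re).inter
        (isClosed_eq continuous_const Complex.continuous_im)
    have : {ρ : Matrix (Fin D) (Fin D) ℂ | 0 ≤ star x ⬝ᵥ ρ *ᵥ x}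
        = (fun ρ : Matrix (Fin D) (Fin D) ℂ => star x ⬝ᵥ ρ *ᵥ x) ⁻¹'
          {z : ℂ | 0 ≤ z.re ∧ 0 = z.im} := by
      ext ρ; simp [Complex.nonneg_iff]
    rw [this]
    exact hS.preimage hc
  have h3 : IsClosed {ρ : Matrix (Fin D) (Fin D) ℂ | ρ.trace = 1} :=
    isClosed_eq (continuous_id.matrix_trace) continuous_const
  have : {ρ : Matrix (Fin D) (Fin D) ℂ | IsDensity ρ}
      = ({ρ : Matrix (Fin D) (Fin D) ℂ | ρ.IsHermitian}
        ∩ ⋂ x : Fin D → ℂ, {ρ | 0 ≤ star x ⬝ᵥ ρ *ᵥ x})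
        ∩ {ρ | ρ.trace = 1} := by
    ext ρ
    simp only [Set.mem_setOf_eq, Set.mem_inter_iff, Set.mem_iInter]
    constructor
    · rintro ⟨hP, ht⟩; exact ⟨⟨hP.1, hP.dotProduct_mulVec_nonneg⟩, ht⟩
    · rintro ⟨⟨hH, hq⟩, ht⟩; exact ⟨.of_dotProduct_mulVec_nonneg hH hq, ht⟩
  rw [this]
  exact ((h1.inter (isClosed_iInter h2)).inter h3)

lemma norm_density_le_one {ρ : Matrix (Fin D) (Fin D) ℂ} (h : IsDensity ρ) : ‖ρ‖ ≤ 1 :=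
  (Matrix.norm_le_iff zero_le_one).mpr fun i j => entry_norm_le_one h.1 h.2 i j

lemma isCompact_density : IsCompact {ρ : Matrix (Fin D) (Fin D) ℂ | IsDensity ρ} := by
  haveI : ProperSpace (Matrix (Fin D) (Fin D) ℂ) := FiniteDimensional.proper ℂ _
  refine IsCompact.of_isClosed_subset (isCompact_closedBall 0 1) isClosed_density ?_
  intro ρ hρ
  rw [Metric.mem_closedBall, dist_zero_right]
  exact norm_density_le_one hρ

end CesaroAux


section Main

attribute [local instance] Matrix.normedAddCommGroup Matrix.normedSpace

/-- Deterministic core of the ergodicity result: for a CPTP map with a unique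
invariant state, the Cesàro averages of the iterates converge to that state. -/
theorem cptp_unique_invariant_cesaro_convergence {D : ℕ} {ι : Type*} [Fintype ι]
    (E : ι → Matrix (Fin D) (Fin D) ℂ)
    (hE : ∑ k, (E k)ᴴ * E k = 1)
    (Φ : Matrix (Fin D) (Fin D) ℂ → Matrix (Fin D) (Fin D) ℂ)
    (hΦ : ∀ X, Φ X = ∑ k, E k * X * (E k)ᴴ)
    (ρes : Matrix (Fin D) (Fin D) ℂ)
    (hes : IsDensity ρes ∧ Φ ρes = ρes)
    (huniq : ∀ σ, IsDensity σ → Φ σ = σ → σ = ρes)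
    (ρ₀ : Matrix (Fin D) (Fin D) ℂ) (hρ₀ : IsDensity ρ₀) :
    Tendsto (fun N : ℕ => (N : ℂ)⁻¹ • ∑ n ∈ Finset.Icc 1 N, Φ^[n] ρ₀)
      atTop (nhds ρes) := by

  classical
  set A : ℕ → Matrix (Fin D) (Fin D) ℂ :=
    fun N => (N : ℂ)⁻¹ • ∑ n ∈ Finset.Icc 1 N, Φ^[n] ρ₀ with hA
  -- basic properties of Φ
  have hΦadd : ∀ X Y, Φ (X + Y) = Φ X + Φ Y := by
    intro X Y; simp [hΦ, Matrix.mul_add, Matrix.add_mul, Finset.sum_add_distrib]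
  have hΦsmul : ∀ (c : ℂ) (X), Φ (c • X) = c • Φ X := by
    intro c X; simp [hΦ, Matrix.mul_smul, Matrix.smul_mul, Finset.smul_sum]
  have hΦcont : Continuous Φ := by
    have : Φ = fun X => ∑ k, E k * X * (E k)ᴴ := funext hΦ
    rw [this]
    exact continuous_finset_sum _ fun k _ =>
      (continuous_const.matrix_mul continuous_id).matrix_mul continuous_const
  have hΦdens : ∀ ρ, IsDensity ρ → IsDensity (Φ ρ) := by
    intro ρ hρ
    constructor
    · rw [hΦ]
      exact posSemidef_finset_sum _ _ fun k _ => hρ.1.mul_mul_conjTranspose_same (E k)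
    · rw [hΦ, Matrix.trace_sum]
      calc ∑ k, (E k * ρ * (E k)ᴴ).trace = ∑ k, ((E k)ᴴ * E k * ρ).trace := by
            refine Finset.sum_congr rfl fun k _ => ?_
            rw [Matrix.trace_mul_cycle]
        _ = ((∑ k, (E k)ᴴ * E k) * ρ).trace := by rw [Finset.sum_mul, Matrix.trace_sum]
        _ = 1 := by rw [hE, one_mul, hρ.2]
  have hiter : ∀ n, IsDensity (Φ^[n] ρ₀) := by
    intro n
    induction n with
    | zero => simpa using hρ₀
    | succ n ih => rw [Function.iterate_succ_apply']; exact hΦdens _ ih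
  -- A N is a density for N ≥ 1
  have hADens : ∀ N : ℕ, 1 ≤ N → IsDensity (A N) := by
    intro N hN
    have hNC : (N : ℂ) ≠ 0 := Nat.cast_ne_zero.mpr (by omega)
    have hinv : (0:ℂ) ≤ (N : ℂ)⁻¹ := by
      rw [show ((N:ℂ)) = (((N:ℝ)):ℂ) by push_cast; ring, ← Complex.ofReal_inv,
        Complex.zero_le_real]
      positivity
    constructor
    · exact posSemidef_smul hinv (posSemidef_finset_sum _ _ fun n _ => (hiter n).1)
    · rw [hA]
      simp only [Matrix.trace_smul, Matrix.trace_sum]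
      have : ∀ n ∈ Finset.Icc 1 N, (Φ^[n] ρ₀).trace = 1 := fun n _ => (hiter n).2
      rw [Finset.sum_congr rfl this, Finset.sum_const, Nat.card_Icc]
      simp only [add_tsub_cancel_right, nsmul_eq_mul, mul_one, smul_eq_mul]
      exact inv_mul_cancel₀ hNC
  -- telescoping identity
  have hstep : ∀ N : ℕ, ∑ n ∈ Finset.Icc 1 N, Φ^[n+1] ρ₀
      = ∑ n ∈ Finset.Icc 1 N, Φ^[n] ρ₀ + (Φ^[N+1] ρ₀ - Φ^[1] ρ₀) := by
    intro N
    induction N with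
    | zero => simp
    | succ N ih =>
        rw [Finset.sum_Icc_succ_top (by omega), Finset.sum_Icc_succ_top (by omega), ih]
        abel
  -- recursion for the averages
  have hArec : ∀ N : ℕ, Φ (A N) = A N + (N : ℂ)⁻¹ • (Φ^[N+1] ρ₀ - Φ^[1] ρ₀) := by
    intro N
    have hmap : Φ (∑ n ∈ Finset.Icc 1 N, Φ^[n] ρ₀)
        = ∑ n ∈ Finset.Icc 1 N, Φ (Φ^[n] ρ₀) :=
      map_sum (AddMonoidHom.mk' Φ hΦadd) _ _
    have hΦit : ∀ n, Φ (Φ^[n] ρ₀) = Φ^[n+1] ρ₀ := fun n =>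
      (Function.iterate_succ_apply' Φ n ρ₀).symm
    rw [hA]
    simp only
    rw [hΦsmul, hmap, Finset.sum_congr rfl fun n _ => hΦit n, hstep, smul_add]
  -- error term tends to zero
  have herr : Tendsto (fun N : ℕ => (N : ℂ)⁻¹ • (Φ^[N+1] ρ₀ - Φ^[1] ρ₀)) atTop (nhds 0) := by
    refine squeeze_zero_norm (fun N => ?_) (tendsto_const_div_atTop_nhds_zero_nat 2)
    · 
      rw [norm_smul, norm_inv, Complex.norm_natCast]
      have hb : ‖Φ^[N+1] ρ₀ - Φ^[1] ρ₀‖ ≤ 2 := by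
        calc ‖Φ^[N+1] ρ₀ - Φ^[1] ρ₀‖ ≤ ‖Φ^[N+1] ρ₀‖ + ‖Φ^[1] ρ₀‖ := norm_sub_le _ _
          _ ≤ 1 + 1 := add_le_add (norm_density_le_one (hiter _)) (norm_density_le_one (hiter _))
          _ = 2 := by norm_num
      rw [div_eq_inv_mul]
      exact mul_le_mul_of_nonneg_left hb (by positivity)
  -- reduce to the shifted sequence
  rw [← tendsto_add_atTop_iff_nat 1]
  -- subsequence argument
  apply tendsto_of_subseq_tendsto
  intro ns hns
  haveI : FirstCountableTopology (Matrix (Fin D) (Fin D) ℂ) :=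
    inferInstanceAs (FirstCountableTopology (Fin D → Fin D → ℂ))
  obtain ⟨L, hL, ms, hms, hconv⟩ :=
    isCompact_density.tendsto_subseq (x := fun n => A (ns n + 1))
      (fun n => hADens (ns n + 1) (by omega))
  refine ⟨ms, ?_⟩
  have hφtop : Tendsto (fun n => ns (ms n) + 1) atTop atTop :=
    (tendsto_add_atTop_nat 1).comp (hns.comp hms.tendsto_atTop)
  have hconv' : Tendsto (fun n => A (ns (ms n) + 1)) atTop (nhds L) := hconv
  have hΦL : Φ L = L := by
    have h1 : Tendsto (fun n => Φ (A (ns (ms n) + 1))) atTop (nhds (Φ L)) :=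
      (hΦcont.tendsto L).comp hconv'
    have h2 : Tendsto (fun n => Φ (A (ns (ms n) + 1))) atTop (nhds (L + 0)) := by
      have herr' : Tendsto (fun n => ((ns (ms n) + 1 : ℕ) : ℂ)⁻¹ •
          (Φ^[(ns (ms n) + 1) + 1] ρ₀ - Φ^[1] ρ₀)) atTop (nhds 0) := herr.comp hφtop
      have := hconv'.add herr'
      refine this.congr fun n => ?_
      rw [← hArec]
    rw [add_zero] at h2
    exact tendsto_nhds_unique h1 h2
  have hLes : L = ρes := huniq L hL hΦL
  rw [← hLes]
  exact hconv

end Main
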